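/- arXiv:1909.00469 — 3 statements merged into one kernel-verified Lean document; each statement's English description precedes it below -/
import Mathlib

section
/- Let r, s, t, u be nonzero real numbers. The double sequence x defined by x_{kl} = (1/(rt)) Σ_{i=0}^{k} Σ_{j=0}^{l} (−s/r)^{k−i} (−u/t)^{l−j} (−1)^j satisfies (B(r,s,t,u)x)_{kl} = (−1)^l for all k, l ∈ ℕ, and x belongs to B(C_f) but not to B[C_f]; hence the inclusion B[C_f] ⊆ B(C_f) is strict. -/
open Finset

noncomputable section

/-- The four-dimensional generalized difference matrix `B(r,s,t,u)` acting on a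
double sequence `x : ℕ × ℕ → ℂ`; terms with a negative index are taken to be `0`. -/
def Btrans (r s t u : ℝ) (x : ℕ × ℕ → ℂ) : ℕ × ℕ → ℂ := fun p =>
  (s * u : ℂ) * (if p.1 = 0 ∨ p.2 = 0 then 0 else x (p.1 - 1, p.2 - 1)) +
  (s * t : ℂ) * (if p.1 = 0 then 0 else x (p.1 - 1, p.2)) +
  (r * u : ℂ) * (if p.2 = 0 then 0 else x (p.1, p.2 - 1)) +
  (r * t : ℂ) * x p

/-- `x` is strongly almost convergent to `L` ("[f2]-lim x = L"). -/
def StronglyAlmostConvTo (x : ℕ × ℕ → ℂ) (L : ℂ) : Prop :=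
  ∀ ε > (0 : ℝ), ∃ Q : ℕ, ∀ q q' : ℕ, Q ≤ q → Q ≤ q' → ∀ m n : ℕ,
    (1 / (((q : ℝ) + 1) * ((q' : ℝ) + 1))) *
      ∑ k ∈ Finset.range (q + 1), ∑ l ∈ Finset.range (q' + 1),
        ‖x (m + k, n + l) - L‖ < ε

/-- `x` is almost convergent to `L` ("f2-lim x = L"). -/
def AlmostConvTo (x : ℕ × ℕ → ℂ) (L : ℂ) : Prop :=
  ∀ ε > (0 : ℝ), ∃ Q : ℕ, ∀ q q' : ℕ, Q ≤ q → Q ≤ q' → ∀ m n : ℕ,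
    ‖(1 / (((q : ℂ) + 1) * ((q' : ℂ) + 1))) *
      (∑ k ∈ Finset.range (q + 1), ∑ l ∈ Finset.range (q' + 1), x (m + k, n + l)) - L‖ < ε

/-- The set of values whose supremum is the `[C_f]`-norm of `y`. -/
def CfNormSet (y : ℕ × ℕ → ℂ) : Set ℝ :=
  {v | ∃ q q' m n : ℕ, v = (1 / (((q : ℝ) + 1) * ((q' : ℝ) + 1))) *
    ∑ k ∈ Finset.range (q + 1), ∑ l ∈ Finset.range (q' + 1), ‖y (m + k, n + l)‖}

/-- The `[C_f]`-norm. -/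
def CfNorm (y : ℕ × ℕ → ℂ) : ℝ := sSup (CfNormSet y)

/-- The formal inverse transform of `B(r,s,t,u)`. -/
def Binv (r s t u : ℝ) (y : ℕ × ℕ → ℂ) : ℕ × ℕ → ℂ := fun p =>
  (1 / (r * t : ℂ)) * ∑ k ∈ Finset.range (p.1 + 1), ∑ l ∈ Finset.range (p.2 + 1),
    ((-s : ℂ) / r) ^ (p.1 - k) * ((-u : ℂ) / t) ^ (p.2 - l) * y (k, l)

/-- Pringsheim convergence of a double sequence. -/
def PConvTo (s : ℕ × ℕ → ℂ) (S : ℂ) : Prop :=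
  ∀ ε > (0 : ℝ), ∃ N : ℕ, ∀ m n : ℕ, N ≤ m → N ≤ n → ‖s (m, n) - S‖ < ε

/-- Boundedness of a double sequence. -/
def Bdd2 (s : ℕ × ℕ → ℂ) : Prop := ∃ M : ℝ, ∀ m n : ℕ, ‖s (m, n)‖ ≤ M

/-- bp-convergence: bounded Pringsheim convergence. -/
def BPConvTo (s : ℕ × ℕ → ℂ) (S : ℂ) : Prop := Bdd2 s ∧ PConvTo s S

/-- Rectangular partial sums of a double series. -/
def PartialSums (c : ℕ × ℕ → ℂ) : ℕ × ℕ → ℂ := fun p =>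
  ∑ k ∈ Finset.range (p.1 + 1), ∑ l ∈ Finset.range (p.2 + 1), c (k, l)

/-- bp-convergence of the double series `Σ c_{kl}`. -/
def BPSeriesConv (c : ℕ × ℕ → ℂ) : Prop := ∃ S, BPConvTo (PartialSums c) S

/-- Pringsheim convergence of a real double sequence. -/
def PConvToR (s : ℕ × ℕ → ℝ) (S : ℝ) : Prop :=
  ∀ ε > (0 : ℝ), ∃ N : ℕ, ∀ m n : ℕ, N ≤ m → N ≤ n → |s (m, n) - S| < ε

/-- bp-convergence of a real double sequence. -/
def BPConvToR (s : ℕ × ℕ → ℝ) (S : ℝ) : Prop :=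
  (∃ M : ℝ, ∀ m n : ℕ, |s (m, n)| ≤ M) ∧ PConvToR s S

/-- The rectangle `{(j,k) : m ≤ j ≤ m+p-1, n ≤ k ≤ n+q-1}`. -/
def rectSet (m n p q : ℕ) : Set (ℕ × ℕ) :=
  {jk | m ≤ jk.1 ∧ jk.1 ≤ m + p - 1 ∧ n ≤ jk.2 ∧ jk.2 ≤ n + q - 1}

/-- `E` is uniformly of zero density. -/
def UnifZeroDensity (E : Set (ℕ × ℕ)) : Prop :=
  ∀ ε > (0 : ℝ), ∃ P : ℕ, ∀ p q : ℕ, P ≤ p → P ≤ q → ∀ m n : ℕ,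
    ((E ∩ rectSet m n p q).ncard : ℝ) ≤ ε * p * q

/-- The inner sums `Σ_{j=k}^{m} Σ_{i=l}^{n} (−s/r)^{j−k} (−u/t)^{i−l} a_{ji}`. -/
def innerS (r s t u : ℝ) (a : ℕ × ℕ → ℂ) (k l m n : ℕ) : ℂ :=
  ∑ j ∈ Finset.Icc k m, ∑ i ∈ Finset.Icc l n,
    ((-s : ℂ) / r) ^ (j - k) * ((-u : ℂ) / t) ^ (i - l) * a (j, i)

/-- The matrix `d_{mnkl}(a)` (taken to be `0` when `k > m` or `l > n`). -/
def dmat (r s t u : ℝ) (a : ℕ × ℕ → ℂ) (m n k l : ℕ) : ℂ :=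
  innerS r s t u a k l m n / (r * t : ℂ)

/-- The double difference `Δ₁₁ a_{mnkl}`. -/
def Delta11 (A : ℕ × ℕ → ℕ × ℕ → ℂ) (m n k l : ℕ) : ℂ :=
  A (m, n) (k, l) - A (m, n) (k + 1, l) - A (m, n) (k, l + 1) + A (m, n) (k + 1, l + 1)

/-- The matrix `e_{mnkl}` associated with a four-dimensional matrix `A`
(taken to be `0` when `k > m` or `l > n`). -/
def emat (r s t u : ℝ) (A : ℕ × ℕ → ℕ × ℕ → ℂ) (m n k l : ℕ) : ℂ :=
  ∑ i ∈ Finset.Icc k m, ∑ j ∈ Finset.Icc l n,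
    ((-s : ℂ) / r) ^ (i - k) * ((-u : ℂ) / t) ^ (j - l) * A (m, n) (i, j) / (r * t : ℂ)

/-- `Δ₁₁` applied to the `e`-matrix. -/
def Delta11e (r s t u : ℝ) (A : ℕ × ℕ → ℕ × ℕ → ℂ) (m n k l : ℕ) : ℂ :=
  emat r s t u A m n k l - emat r s t u A m n (k + 1) l -
    emat r s t u A m n k (l + 1) + emat r s t u A m n (k + 1) (l + 1)

end

/-! ### Auxiliary lemmas -/

lemma one_dim_rec (a : ℂ) (f : ℕ → ℂ) (m : ℕ) :
    ∑ k ∈ Finset.range (m + 1 + 1), a ^ (m + 1 - k) * f k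
      = a * ∑ k ∈ Finset.range (m + 1), a ^ (m - k) * f k + f (m + 1) := by
  rw [Finset.sum_range_succ, Finset.mul_sum]
  congr 1
  · refine Finset.sum_congr rfl fun k hk => ?_
    have hk' := Finset.mem_range.mp hk
    have h : m + 1 - k = (m - k) + 1 := by omega
    rw [h, pow_succ]; ring
  · simp

lemma Btrans_Binv (r s t u : ℝ) (hr : r ≠ 0) (ht : t ≠ 0) (y : ℕ × ℕ → ℂ) :
    Btrans r s t u (Binv r s t u y) = y := by
  have hrC : (r : ℂ) ≠ 0 := Complex.ofReal_ne_zero.mpr hr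
  have htC : (t : ℂ) ≠ 0 := Complex.ofReal_ne_zero.mpr ht
  set a : ℂ := (-s : ℂ) / r with ha
  set b : ℂ := (-u : ℂ) / t with hb
  set g : ℕ → ℕ → ℂ := fun k n => ∑ l ∈ Finset.range (n + 1), b ^ (n - l) * y (k, l) with hg
  set S : ℕ → ℕ → ℂ := fun m n => ∑ k ∈ Finset.range (m + 1), a ^ (m - k) * g k n with hS
  have hBinv : ∀ m n : ℕ, Binv r s t u y (m, n) = (1 / (r * t : ℂ)) * S m n := by
    intro m n
    simp only [Binv, hS, hg]
    congr 1
    refine Finset.sum_congr rfl fun k _ => ?_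
    rw [Finset.mul_sum]
    exact Finset.sum_congr rfl fun l _ => by ring
  have recS : ∀ m n, S (m + 1) n = a * S m n + g (m + 1) n := by
    intro m n
    exact one_dim_rec a (fun k => g k n) m
  have recg : ∀ k n, g k (n + 1) = b * g k n + y (k, n + 1) := by
    intro k n
    exact one_dim_rec b (fun l => y (k, l)) n
  have S0n : ∀ n, S 0 n = g 0 n := by intro n; simp [hS]
  have gk0 : ∀ k, g k 0 = y (k, 0) := by intro k; simp [hg]
  have S00 : S 0 0 = y (0, 0) := by rw [S0n, gk0]
  have S0succ : ∀ n, S 0 (n + 1) = b * S 0 n + y (0, n + 1) := by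
    intro n; rw [S0n, S0n, recg]
  have Ssucc0 : ∀ m, S (m + 1) 0 = a * S m 0 + y (m + 1, 0) := by
    intro m; rw [recS, gk0]
  have key : ∀ m n, S (m + 1) (n + 1)
      = a * S m (n + 1) + b * S (m + 1) n - a * b * S m n + y (m + 1, n + 1) := by
    intro m n
    have h1 := recS m (n + 1)
    have h2 := recg (m + 1) n
    have h3 := recS m n
    have hg' : g (m + 1) n = S (m + 1) n - a * S m n := by rw [h3]; ring
    rw [h1, h2, hg']; ring
  funext p
  obtain ⟨m, n⟩ := p
  match m, n with
  | 0, 0 =>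
    simp only [Btrans]
    norm_num
    have hB0 : Binv r s t u y (0, 0) = (1 / (r * t : ℂ)) * y (0, 0) :=
      (hBinv 0 0).trans (by rw [S00])
    rw [hB0]
    field_simp
  | 0, n + 1 =>
    simp only [Btrans]
    norm_num
    rw [hBinv 0 (n + 1), hBinv 0 n, S0succ n, hb]
    field_simp
    ring
  | m + 1, 0 =>
    simp only [Btrans]
    norm_num
    rw [hBinv (m + 1) 0, hBinv m 0, Ssucc0 m, ha]
    field_simp
    ring
  | m + 1, n + 1 =>
    simp only [Btrans]
    norm_num
    rw [hBinv (m + 1) (n + 1), hBinv m (n + 1), hBinv (m + 1) n, hBinv m n,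
      key m n, ha, hb]
    field_simp
    ring

lemma alt_almostConv : AlmostConvTo (fun p => (-1 : ℂ) ^ p.2) 0 := by
  intro ε hε
  obtain ⟨N, hN⟩ := exists_nat_gt (1 / ε)
  refine ⟨N, fun q q' hq hq' m n => ?_⟩
  set c : ℂ := ∑ l ∈ Finset.range (q' + 1), (-1 : ℂ) ^ l with hc
  have hcabs : ‖c‖ ≤ 1 := by
    rw [hc, neg_one_geom_sum]
    split <;> simp
  have hsum : ∑ k ∈ Finset.range (q + 1), ∑ l ∈ Finset.range (q' + 1),
      (-1 : ℂ) ^ (n + l) = ((q : ℂ) + 1) * ((-1) ^ n * c) := by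
    have hinner : ∀ k : ℕ, ∑ l ∈ Finset.range (q' + 1), (-1 : ℂ) ^ (n + l)
        = (-1) ^ n * c := by
      intro k
      rw [hc, Finset.mul_sum]
      exact Finset.sum_congr rfl fun l _ => pow_add _ _ _
    rw [Finset.sum_congr rfl fun k _ => hinner k, Finset.sum_const, Finset.card_range,
      nsmul_eq_mul]
    push_cast
    ring
  simp only []
  have hq1 : ((q : ℂ) + 1) ≠ 0 := by
    have : ((q : ℂ) + 1) = ((q + 1 : ℕ) : ℂ) := by push_cast; ring
    rw [this]; exact Nat.cast_ne_zero.mpr (Nat.succ_ne_zero q)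
  have hq'1 : ((q' : ℂ) + 1) ≠ 0 := by
    have : ((q' : ℂ) + 1) = ((q' + 1 : ℕ) : ℂ) := by push_cast; ring
    rw [this]; exact Nat.cast_ne_zero.mpr (Nat.succ_ne_zero q')
  have hexpr : (1 / (((q : ℂ) + 1) * ((q' : ℂ) + 1)))
      * (((q : ℂ) + 1) * ((-1) ^ n * c)) - 0
      = ((-1) ^ n * c) * (1 / ((q' : ℂ) + 1)) := by
    field_simp
    ring
  have hgoal : ‖((-1 : ℂ) ^ n * c) * (1 / ((q' : ℂ) + 1))‖
      ≤ 1 / ((q' : ℝ) + 1) := by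
    rw [norm_mul, norm_mul, norm_pow]
    have h1 : ‖(-1 : ℂ)‖ = 1 := by simp
    have h2 : ‖1 / ((q' : ℂ) + 1)‖ = 1 / ((q' : ℝ) + 1) := by
      rw [norm_div, norm_one]
      congr 1
      have : ((q' : ℂ) + 1) = ((q' + 1 : ℕ) : ℂ) := by push_cast; ring
      rw [this, Complex.norm_natCast]
      push_cast; ring
    rw [h1, h2, one_pow, one_mul]
    have hpos : (0 : ℝ) < 1 / ((q' : ℝ) + 1) := by positivity
    calc ‖c‖ * (1 / ((q' : ℝ) + 1)) ≤ 1 * (1 / ((q' : ℝ) + 1)) := by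
          exact mul_le_mul_of_nonneg_right hcabs (le_of_lt hpos)
      _ = 1 / ((q' : ℝ) + 1) := by ring
  have hfin : 1 / ((q' : ℝ) + 1) < ε := by
    rw [div_lt_iff₀ (by positivity)]
    have h1 : (1 : ℝ) < ε * N := by
      have := (div_lt_iff₀ hε).mp hN
      linarith [this]
    have hN' : (N : ℝ) ≤ (q' : ℝ) := by exact_mod_cast hq'
    nlinarith [hε]
  calc ‖(1 / (((q : ℂ) + 1) * ((q' : ℂ) + 1))) *
        (∑ k ∈ Finset.range (q + 1), ∑ l ∈ Finset.range (q' + 1),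
          (fun p : ℕ × ℕ => (-1 : ℂ) ^ p.2) (m + k, n + l)) - 0‖
      = ‖((-1 : ℂ) ^ n * c) * (1 / ((q' : ℂ) + 1))‖ := by
        simp only []
        rw [hsum, hexpr]
    _ ≤ 1 / ((q' : ℝ) + 1) := hgoal
    _ < ε := hfin

lemma pair_sum (L : ℂ) (M : ℕ) :
    2 * (M : ℝ) ≤ ∑ l ∈ Finset.range (2 * M), ‖(-1 : ℂ) ^ l - L‖ := by
  induction M with
  | zero => simp
  | succ M ih =>
    rw [show 2 * (M + 1) = (2 * M) + 1 + 1 by ring, Finset.sum_range_succ,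
      Finset.sum_range_succ]
    have h1 : (-1 : ℂ) ^ (2 * M) = 1 := by
      rw [pow_mul]; norm_num
    have h2 : (-1 : ℂ) ^ (2 * M + 1) = -1 := by
      rw [pow_succ, h1]; ring
    have hkey : 2 ≤ ‖(-1 : ℂ) ^ (2 * M) - L‖
        + ‖(-1 : ℂ) ^ (2 * M + 1) - L‖ := by
      rw [h1, h2]
      calc (2 : ℝ) = ‖(1 - L) - (-1 - L)‖ := by norm_num
        _ ≤ ‖1 - L‖ + ‖-1 - L‖ := by
            exact norm_sub_le _ _
    push_cast
    linarith

lemma not_strong : ¬ ∃ L : ℂ, StronglyAlmostConvTo (fun p => (-1 : ℂ) ^ p.2) L := by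
  rintro ⟨L, hL⟩
  obtain ⟨Q, hQ⟩ := hL 1 one_pos
  have h := hQ Q (2 * Q + 1) le_rfl (by omega) 0 0
  have hsum : ((Q : ℝ) + 1) * (2 * ((Q : ℝ) + 1))
      ≤ ∑ k ∈ Finset.range (Q + 1), ∑ l ∈ Finset.range (2 * Q + 1 + 1),
        ‖(fun p : ℕ × ℕ => (-1 : ℂ) ^ p.2) (0 + k, 0 + l) - L‖ := by
    have hrow : ∀ k : ℕ, 2 * ((Q : ℝ) + 1)
        ≤ ∑ l ∈ Finset.range (2 * Q + 1 + 1),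
          ‖(fun p : ℕ × ℕ => (-1 : ℂ) ^ p.2) (0 + k, 0 + l) - L‖ := by
      intro k
      have := pair_sum L (Q + 1)
      have heq : ∑ l ∈ Finset.range (2 * (Q + 1)), ‖(-1 : ℂ) ^ l - L‖
          = ∑ l ∈ Finset.range (2 * Q + 1 + 1),
            ‖(fun p : ℕ × ℕ => (-1 : ℂ) ^ p.2) (0 + k, 0 + l) - L‖ := by
        rw [show 2 * (Q + 1) = 2 * Q + 1 + 1 by ring]
        exact Finset.sum_congr rfl fun l _ => by simp
      rw [heq] at this
      push_cast at this ⊢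
      linarith
    calc ((Q : ℝ) + 1) * (2 * ((Q : ℝ) + 1))
        = ∑ _k ∈ Finset.range (Q + 1), 2 * ((Q : ℝ) + 1) := by
          rw [Finset.sum_const, Finset.card_range, nsmul_eq_mul]; push_cast; ring
      _ ≤ _ := Finset.sum_le_sum fun k _ => hrow k
  have hD : (0 : ℝ) < ((Q : ℝ) + 1) * (((2 * Q + 1 : ℕ) : ℝ) + 1) := by positivity
  have hDeq : ((Q : ℝ) + 1) * (((2 * Q + 1 : ℕ) : ℝ) + 1)
      = ((Q : ℝ) + 1) * (2 * ((Q : ℝ) + 1)) := by push_cast; ring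
  have hone : (1 : ℝ) ≤ (1 / (((Q : ℝ) + 1) * (((2 * Q + 1 : ℕ) : ℝ) + 1))) *
      ∑ k ∈ Finset.range (Q + 1), ∑ l ∈ Finset.range (2 * Q + 1 + 1),
        ‖(fun p : ℕ × ℕ => (-1 : ℂ) ^ p.2) (0 + k, 0 + l) - L‖ := by
    rw [hDeq] at hD ⊢
    rw [one_div, ← div_eq_inv_mul, le_div_iff₀ hD, one_mul]
    exact hsum
  linarith

lemma strong_imp_almost (x : ℕ × ℕ → ℂ) (L : ℂ) (h : StronglyAlmostConvTo x L) :
    AlmostConvTo x L := by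
  intro ε hε
  obtain ⟨Q, hQ⟩ := h ε hε
  refine ⟨Q, fun q q' hq hq' m n => ?_⟩
  refine lt_of_le_of_lt ?_ (hQ q q' hq hq' m n)
  have hq1 : ((q : ℂ) + 1) ≠ 0 := by
    have : ((q : ℂ) + 1) = ((q + 1 : ℕ) : ℂ) := by push_cast; ring
    rw [this]; exact Nat.cast_ne_zero.mpr (Nat.succ_ne_zero q)
  have hq'1 : ((q' : ℂ) + 1) ≠ 0 := by
    have : ((q' : ℂ) + 1) = ((q' + 1 : ℕ) : ℂ) := by push_cast; ring
    rw [this]; exact Nat.cast_ne_zero.mpr (Nat.succ_ne_zero q')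
  have hdist : ∑ k ∈ Finset.range (q + 1), ∑ l ∈ Finset.range (q' + 1),
      (x (m + k, n + l) - L)
      = (∑ k ∈ Finset.range (q + 1), ∑ l ∈ Finset.range (q' + 1), x (m + k, n + l))
        - ((q : ℂ) + 1) * ((q' : ℂ) + 1) * L := by
    simp only [Finset.sum_sub_distrib, Finset.sum_const, Finset.card_range, nsmul_eq_mul]
    push_cast
    ring
  have heq : (1 / (((q : ℂ) + 1) * ((q' : ℂ) + 1))) *
      (∑ k ∈ Finset.range (q + 1), ∑ l ∈ Finset.range (q' + 1), x (m + k, n + l)) - L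
      = (1 / (((q : ℂ) + 1) * ((q' : ℂ) + 1))) *
        ∑ k ∈ Finset.range (q + 1), ∑ l ∈ Finset.range (q' + 1),
          (x (m + k, n + l) - L) := by
    rw [hdist]
    field_simp
  rw [heq, norm_mul]
  have habs1 : ‖1 / (((q : ℂ) + 1) * ((q' : ℂ) + 1))‖
      = 1 / (((q : ℝ) + 1) * ((q' : ℝ) + 1)) := by
    rw [norm_div, norm_one, norm_mul]
    have e1 : ((q : ℂ) + 1) = ((q + 1 : ℕ) : ℂ) := by push_cast; ring
    have e2 : ((q' : ℂ) + 1) = ((q' + 1 : ℕ) : ℂ) := by push_cast; ring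
    rw [e1, e2, Complex.norm_natCast, Complex.norm_natCast]
    push_cast
    ring
  rw [habs1]
  refine mul_le_mul_of_nonneg_left ?_ (by positivity)
  calc ‖∑ k ∈ Finset.range (q + 1), ∑ l ∈ Finset.range (q' + 1),
        (x (m + k, n + l) - L)‖
      ≤ ∑ k ∈ Finset.range (q + 1), ‖∑ l ∈ Finset.range (q' + 1),
          (x (m + k, n + l) - L)‖ := norm_sum_le _ _
    _ ≤ ∑ k ∈ Finset.range (q + 1), ∑ l ∈ Finset.range (q' + 1),
        ‖x (m + k, n + l) - L‖ :=
        Finset.sum_le_sum fun k _ => norm_sum_le _ _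

/-- The sequence
`x_{kl} = (1/(rt)) Σ_{i=0}^{k} Σ_{j=0}^{l} (−s/r)^{k−i} (−u/t)^{l−j} (−1)^j` satisfies
`(B(r,s,t,u)x)_{kl} = (−1)^l`, and `x ∈ B(C_f) \ B[C_f]`; hence `B[C_f] ⊂ B(C_f)`
strictly. -/
theorem stmt12 (r s t u : ℝ) (hr : r ≠ 0) (hs : s ≠ 0) (ht : t ≠ 0) (hu : u ≠ 0) :
    Btrans r s t u (Binv r s t u (fun p => (-1 : ℂ) ^ p.2)) = (fun p => (-1 : ℂ) ^ p.2) ∧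
    (∃ L : ℂ, AlmostConvTo
      (Btrans r s t u (Binv r s t u (fun p => (-1 : ℂ) ^ p.2))) L) ∧
    (¬ ∃ L : ℂ, StronglyAlmostConvTo
      (Btrans r s t u (Binv r s t u (fun p => (-1 : ℂ) ^ p.2))) L) ∧
    {x : ℕ × ℕ → ℂ | ∃ L, StronglyAlmostConvTo (Btrans r s t u x) L} ⊂
      {x : ℕ × ℕ → ℂ | ∃ L, AlmostConvTo (Btrans r s t u x) L} := by
  have h1 := Btrans_Binv r s t u hr ht (fun p => (-1 : ℂ) ^ p.2)
  refine ⟨h1, ⟨0, by rw [h1]; exact alt_almostConv⟩, by rw [h1]; exact not_strong, ?_, ?_⟩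
  · rintro x ⟨L, hL⟩
    exact ⟨L, strong_imp_almost _ L hL⟩
  · intro hsub
    have hx : Binv r s t u (fun p => (-1 : ℂ) ^ p.2)
        ∈ {x : ℕ × ℕ → ℂ | ∃ L, AlmostConvTo (Btrans r s t u x) L} :=
      ⟨0, by rw [h1]; exact alt_almostConv⟩
    have hmem := hsub hx
    rw [Set.mem_setOf_eq, h1] at hmem
    exact not_strong hmem
end

section
/- Every bounded double sequence that converges in Pringsheim's sense to L is strongly almost convergent to L; that is, C_bp ⊆ [C_f] and the Pringsheim limit equals the [f2]-limit. -/
open Finset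

/-- Every bounded, Pringsheim convergent double sequence is strongly
almost convergent to the same limit: `C_bp ⊆ [C_f]`. -/
theorem stmt13 (x : ℕ × ℕ → ℂ) (L : ℂ)
    (hbdd : ∃ M : ℝ, ∀ m n : ℕ, ‖x (m, n)‖ ≤ M)
    (hconv : ∀ ε > (0 : ℝ), ∃ N : ℕ, ∀ m n : ℕ, N ≤ m → N ≤ n →
      ‖x (m, n) - L‖ < ε) :
    StronglyAlmostConvTo x L := by
  intro ε hε
  obtain ⟨M, hM⟩ := hbdd
  obtain ⟨M', hM'nonneg, hMabs⟩ :
      ∃ M' : ℝ, 0 ≤ M' ∧ ∀ m n : ℕ, ‖x (m, n) - L‖ ≤ M' := by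
    refine ⟨M + ‖L‖, ?_, ?_⟩
    · have h0 := hM 0 0
      have := norm_nonneg (x (0,0))
      have := norm_nonneg L
      linarith
    · intro m n
      calc ‖x (m, n) - L‖ ≤ ‖x (m, n)‖ + ‖L‖ := by
            simpa [sub_eq_add_neg] using norm_add_le (x (m, n)) (-L)
        _ ≤ M + ‖L‖ := by have := hM m n; linarith
  obtain ⟨N, hN⟩ := hconv (ε/2) (by linarith)
  obtain ⟨Q, hQ⟩ := exists_nat_gt (4 * N * M' / ε)
  have hQ' : 4 * N * M' < ε * (Q + 1) := by
    rw [div_lt_iff₀ hε] at hQ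
    nlinarith
  refine ⟨Q, fun q q' hq hq' m n => ?_⟩
  have hq1 : (0:ℝ) < (q:ℝ) + 1 := by positivity
  have hq'1 : (0:ℝ) < (q':ℝ) + 1 := by positivity
  have hqQ : (Q:ℝ) + 1 ≤ (q:ℝ) + 1 := by exact_mod_cast Nat.succ_le_succ hq
  have hq'Q : (Q:ℝ) + 1 ≤ (q':ℝ) + 1 := by exact_mod_cast Nat.succ_le_succ hq'
  -- termwise bound
  have hterm : ∀ k l : ℕ,
      ‖x (m+k, n+l) - L‖ ≤
        ε/2 + ((if k < N then M' else 0) + (if l < N then M' else 0)) := by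
    intro k l
    by_cases hk : k < N
    · simp only [if_pos hk]
      have h2 : (0:ℝ) ≤ if l < N then M' else 0 := by positivity
      have := hMabs (m+k) (n+l)
      linarith
    · by_cases hl : l < N
      · simp only [if_neg hk, if_pos hl]
        have := hMabs (m+k) (n+l)
        linarith
      · have hkN : N ≤ m + k := le_trans (Nat.le_of_not_lt hk) (Nat.le_add_left _ _)
        have hlN : N ≤ n + l := le_trans (Nat.le_of_not_lt hl) (Nat.le_add_left _ _)
        have := hN (m+k) (n+l) hkN hlN
        simp only [if_neg hk, if_neg hl]
        linarith
  have hsumk : ∑ k ∈ Finset.range (q+1), (if k < N then M' else 0) ≤ N * M' := by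
    rw [← Finset.sum_filter]
    have hsub : (Finset.range (q+1)).filter (fun k => k < N) ⊆ Finset.range N := by
      intro k hk
      simp only [Finset.mem_filter, Finset.mem_range] at hk ⊢
      exact hk.2
    calc ∑ k ∈ (Finset.range (q+1)).filter (fun k => k < N), M'
        ≤ ∑ k ∈ Finset.range N, M' :=
          Finset.sum_le_sum_of_subset_of_nonneg hsub (fun _ _ _ => hM'nonneg)
      _ = N * M' := by simp [mul_comm]
  have hsuml : ∑ l ∈ Finset.range (q'+1), (if l < N then M' else 0) ≤ N * M' := by
    rw [← Finset.sum_filter]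
    have hsub : (Finset.range (q'+1)).filter (fun l => l < N) ⊆ Finset.range N := by
      intro l hl
      simp only [Finset.mem_filter, Finset.mem_range] at hl ⊢
      exact hl.2
    calc ∑ l ∈ (Finset.range (q'+1)).filter (fun l => l < N), M'
        ≤ ∑ l ∈ Finset.range N, M' :=
          Finset.sum_le_sum_of_subset_of_nonneg hsub (fun _ _ _ => hM'nonneg)
      _ = N * M' := by simp [mul_comm]
  have hS : ∑ k ∈ Finset.range (q + 1), ∑ l ∈ Finset.range (q' + 1),
      ‖x (m + k, n + l) - L‖ ≤
      ((q:ℝ)+1) * ((q':ℝ)+1) * (ε/2) + ((q':ℝ)+1) * (N * M') + ((q:ℝ)+1) * (N * M') := by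
    calc ∑ k ∈ Finset.range (q + 1), ∑ l ∈ Finset.range (q' + 1),
        ‖x (m + k, n + l) - L‖
        ≤ ∑ k ∈ Finset.range (q + 1), ∑ l ∈ Finset.range (q' + 1),
          (ε/2 + ((if k < N then M' else 0) + (if l < N then M' else 0))) := by
            refine Finset.sum_le_sum fun k _ => Finset.sum_le_sum fun l _ => hterm k l
      _ = ((q:ℝ)+1) * ((q':ℝ)+1) * (ε/2)
          + ((q':ℝ)+1) * (∑ k ∈ Finset.range (q+1), (if k < N then M' else 0))
          + ((q:ℝ)+1) * (∑ l ∈ Finset.range (q'+1), (if l < N then M' else 0)) := by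
            simp [Finset.sum_add_distrib, Finset.mul_sum, Finset.sum_comm]
            push_cast
            ring
      _ ≤ _ := by
            have h3 := mul_le_mul_of_nonneg_left hsumk (le_of_lt hq'1)
            have h4 := mul_le_mul_of_nonneg_left hsuml (le_of_lt hq1)
            linarith [h3, h4]
  have hP : (0:ℝ) < ((q:ℝ)+1) * ((q':ℝ)+1) := mul_pos hq1 hq'1
  rw [one_div, inv_mul_lt_iff₀ hP]
  have hNM : (0:ℝ) ≤ (N:ℝ) * M' := by positivity
  have key : ((q:ℝ)+1) * ((q':ℝ)+1) * (ε/2) + ((q':ℝ)+1) * (N * M') + ((q:ℝ)+1) * (N * M')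
      < ε * (((q:ℝ)+1) * ((q':ℝ)+1)) := by
    have h1 : ((q':ℝ)+1) * ((N:ℝ) * M') < ((q:ℝ)+1) * ((q':ℝ)+1) * (ε/4) := by
      have a := mul_lt_mul_of_pos_left hQ' hq'1
      have b : ((q':ℝ)+1) * (ε*((Q:ℝ)+1)) ≤ ((q':ℝ)+1) * (ε*((q:ℝ)+1)) :=
        mul_le_mul_of_nonneg_left (mul_le_mul_of_nonneg_left hqQ (le_of_lt hε)) (le_of_lt hq'1)
      nlinarith [a, b]
    have h2 : ((q:ℝ)+1) * ((N:ℝ) * M') < ((q:ℝ)+1) * ((q':ℝ)+1) * (ε/4) := by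
      have a := mul_lt_mul_of_pos_left hQ' hq1
      have b : ((q:ℝ)+1) * (ε*((Q:ℝ)+1)) ≤ ((q:ℝ)+1) * (ε*((q':ℝ)+1)) :=
        mul_le_mul_of_nonneg_left (mul_le_mul_of_nonneg_left hq'Q (le_of_lt hε)) (le_of_lt hq1)
      nlinarith [a, b]
    linarith
  linarith
end

section
/- A four-dimensional matrix A = (a_{mnkl}) of complex numbers belongs to the class ([C_f] : M_u) (i.e. for every strongly almost convergent double sequence x the series (Ax)_{mn} = Σ_{k,l} a_{mnkl} x_{kl} bp-converges for each m, n and Ax is bounded) if and only if (1) for each m, n the row A_{mn} = (a_{mnkl})_{k,l} belongs to the β(bp)-dual of [C_f], and (2) sup_{m,n} Σ_{k,l} |a_{mnkl}| < ∞. -/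
open Finset

open Filter Topology BoundedContinuousFunction

noncomputable section Stmt16Aux

/-- Pringsheim convergence gives ordinary convergence along the diagonal. -/
lemma pdiag {s : ℕ × ℕ → ℂ} {S : ℂ} (h : PConvTo s S) :
    Tendsto (fun N => s (N, N)) atTop (nhds S) := by
  rw [Metric.tendsto_atTop]
  intro ε hε
  obtain ⟨N, hN⟩ := h ε hε
  exact ⟨N, fun n hn => by simpa [Complex.dist_eq] using hN n n hn hn⟩

lemma pconv_unique {s : ℕ × ℕ → ℂ} {S S' : ℂ} (h : PConvTo s S) (h' : PConvTo s S') : S = S' :=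
  tendsto_nhds_unique (pdiag h) (pdiag h')

/-- If a Pringsheim-convergent double sequence is eventually equal to `c` on the diagonal,
its limit is `c`. -/
lemma pconv_eventually_const {s : ℕ × ℕ → ℂ} {S c : ℂ} (h : PConvTo s S)
    (N : ℕ) (hc : ∀ n, N ≤ n → s (n, n) = c) : S = c := by
  refine tendsto_nhds_unique (pdiag h) ?_
  have heq : (fun n : ℕ => s (n, n)) =ᶠ[atTop] fun _ => c := by
    filter_upwards [eventually_ge_atTop N] with n hn using hc n hn
  exact Tendsto.congr' heq.symm tendsto_const_nhds

/-- A strongly almost convergent double sequence is bounded. -/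
lemma sac_bounded {x : ℕ × ℕ → ℂ} {L : ℂ} (h : StronglyAlmostConvTo x L) :
    ∃ C : ℝ, 0 ≤ C ∧ ∀ p : ℕ × ℕ, ‖x p‖ ≤ C := by
  obtain ⟨Q, hQ⟩ := h 1 one_pos
  refine ⟨‖L‖ + ((Q : ℝ) + 1) * ((Q : ℝ) + 1), by positivity, ?_⟩
  rintro ⟨m, n⟩
  have h0 := hQ Q Q le_rfl le_rfl m n
  set c : ℝ := ((Q : ℝ) + 1) * ((Q : ℝ) + 1) with hc
  have hcpos : 0 < c := by positivity
  have hsum : ‖x (m, n) - L‖ ≤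
      ∑ k ∈ Finset.range (Q + 1), ∑ l ∈ Finset.range (Q + 1),
        ‖x (m + k, n + l) - L‖ := by
    have h1 : ‖x (m + 0, n + 0) - L‖ ≤
        ∑ l ∈ Finset.range (Q + 1), ‖x (m + 0, n + l) - L‖ :=
      Finset.single_le_sum (f := fun l => ‖x (m + 0, n + l) - L‖)
        (fun i _ => norm_nonneg _)
        (Finset.mem_range.mpr (Nat.succ_pos Q))
    have h2 : (∑ l ∈ Finset.range (Q + 1), ‖x (m + 0, n + l) - L‖) ≤
        ∑ k ∈ Finset.range (Q + 1), ∑ l ∈ Finset.range (Q + 1),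
          ‖x (m + k, n + l) - L‖ :=
      Finset.single_le_sum
        (f := fun k => ∑ l ∈ Finset.range (Q + 1), ‖x (m + k, n + l) - L‖)
        (fun i _ => Finset.sum_nonneg fun _ _ => norm_nonneg _)
        (Finset.mem_range.mpr (Nat.succ_pos Q))
    simpa using h1.trans h2
  have hlt : (∑ k ∈ Finset.range (Q + 1), ∑ l ∈ Finset.range (Q + 1),
      ‖x (m + k, n + l) - L‖) < c := by
    have h1 := (mul_lt_mul_iff_right₀ hcpos).mpr h0
    rwa [← mul_assoc, mul_one_div_cancel hcpos.ne', one_mul, mul_one] at h1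
  have htri : ‖x (m, n)‖ ≤ ‖x (m, n) - L‖ + ‖L‖ := by
    calc ‖x (m, n)‖ = ‖(x (m, n) - L) + L‖ := by ring_nf
    _ ≤ ‖x (m, n) - L‖ + ‖L‖ := norm_add_le _ _
  linarith [hsum.trans_lt hlt]

/-- A double sequence uniformly approximable by finitely supported sequences is strongly almost
convergent to `0`. -/
lemma sac_of_approx {x : ℕ × ℕ → ℂ}
    (h : ∀ ε > (0 : ℝ), ∃ w : ℕ × ℕ → ℂ, ∃ F : Finset (ℕ × ℕ),
      (∀ p ∉ F, w p = 0) ∧ ∀ p, ‖x p - w p‖ ≤ ε) :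
    StronglyAlmostConvTo x 0 := by
  intro ε hε
  obtain ⟨w, F, hF, hw⟩ := h (ε / 4) (by positivity)
  set B : ℝ := ∑ p ∈ F, ‖w p‖ with hB
  have hB0 : 0 ≤ B := Finset.sum_nonneg fun _ _ => norm_nonneg _
  obtain ⟨Q, hQ⟩ := exists_nat_gt (4 * B / ε)
  refine ⟨Q, fun q q' hq hq' m n => ?_⟩
  set c : ℝ := ((q : ℝ) + 1) * ((q' : ℝ) + 1) with hc
  have hcpos : 0 < c := by positivity
  have hcge : (Q : ℝ) ≤ c := by
    have h1 : (Q : ℝ) ≤ (q : ℝ) := by exact_mod_cast hq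
    nlinarith [Nat.cast_nonneg (α := ℝ) q']
  -- bound the sum of |w| over the window by B
  have hwsum : (∑ k ∈ Finset.range (q + 1), ∑ l ∈ Finset.range (q' + 1),
      ‖w (m + k, n + l)‖) ≤ B := by
    rw [← Finset.sum_product']
    set R := (Finset.range (q + 1)) ×ˢ (Finset.range (q' + 1)) with hR
    have hinj : ∀ a ∈ R, ∀ b ∈ R,
        (m + a.1, n + a.2) = (m + b.1, n + b.2) → a = b := by
      rintro ⟨a1, a2⟩ _ ⟨b1, b2⟩ _ hab
      simp only [Prod.mk.injEq] at hab ⊢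
      omega
    have himg : (∑ p ∈ R, ‖w (m + p.1, n + p.2)‖) =
        ∑ p ∈ R.image (fun p : ℕ × ℕ => (m + p.1, n + p.2)), ‖w p‖ :=
      (Finset.sum_image (f := fun p : ℕ × ℕ => ‖w p‖) hinj).symm
    rw [himg]
    set S := R.image (fun p : ℕ × ℕ => (m + p.1, n + p.2)) with hS
    have h1 : (∑ p ∈ S, ‖w p‖) = ∑ p ∈ S ∩ F, ‖w p‖ := by
      refine (Finset.sum_subset Finset.inter_subset_left ?_).symm
      intro p hp hnp
      have : p ∉ F := fun hpF => hnp (Finset.mem_inter.mpr ⟨hp, hpF⟩)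
      simp [hF p this]
    rw [h1]
    exact Finset.sum_le_sum_of_subset_of_nonneg Finset.inter_subset_right
      (fun _ _ _ => norm_nonneg _)
  have hptw : ∀ p : ℕ × ℕ, ‖x p - 0‖ ≤ ε / 4 + ‖w p‖ := by
    intro p
    calc ‖x p - 0‖ = ‖(x p - w p) + w p‖ := by ring_nf
    _ ≤ ‖x p - w p‖ + ‖w p‖ := norm_add_le _ _
    _ ≤ ε / 4 + ‖w p‖ := by linarith [hw p]
  have hsum : (∑ k ∈ Finset.range (q + 1), ∑ l ∈ Finset.range (q' + 1),
      ‖x (m + k, n + l) - 0‖) ≤ c * (ε / 4) + B := by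
    have h1 : (∑ k ∈ Finset.range (q + 1), ∑ l ∈ Finset.range (q' + 1),
        ‖x (m + k, n + l) - 0‖) ≤
        ∑ k ∈ Finset.range (q + 1), ∑ l ∈ Finset.range (q' + 1),
          (ε / 4 + ‖w (m + k, n + l)‖) :=
      Finset.sum_le_sum fun k _ => Finset.sum_le_sum fun l _ => hptw _
    have h2 : (∑ k ∈ Finset.range (q + 1), ∑ l ∈ Finset.range (q' + 1),
        (ε / 4 + ‖w (m + k, n + l)‖)) = c * (ε / 4) +
        ∑ k ∈ Finset.range (q + 1), ∑ l ∈ Finset.range (q' + 1),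
          ‖w (m + k, n + l)‖ := by
      simp only [Finset.sum_add_distrib, Finset.sum_const, Finset.card_range, nsmul_eq_mul]
      push_cast
      ring
    linarith [h1.trans_eq h2, hwsum]
  -- conclude
  have h4B : 4 * B < c * ε := by
    have h1 := (div_lt_iff₀ hε).mp (hQ.trans_le hcge)
    linarith
  have hfin : (∑ k ∈ Finset.range (q + 1), ∑ l ∈ Finset.range (q' + 1),
      ‖x (m + k, n + l) - 0‖) < c * ε := by
    nlinarith [mul_pos hcpos hε]
  calc (1 / c) * ∑ k ∈ Finset.range (q + 1), ∑ l ∈ Finset.range (q' + 1),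
      ‖x (m + k, n + l) - 0‖
      < (1 / c) * (c * ε) := by
        apply mul_lt_mul_of_pos_left hfin
        positivity
    _ = ε := by field_simp

/-- The submodule of finitely supported bounded double sequences. -/
def fsSub : Submodule ℂ (BoundedContinuousFunction (ℕ × ℕ) ℂ) where
  carrier := {x | ∃ F : Finset (ℕ × ℕ), ∀ p ∉ F, x p = 0}
  add_mem' := by
    rintro a b ⟨F, hF⟩ ⟨G, hG⟩
    refine ⟨F ∪ G, fun p hp => ?_⟩
    simp only [BoundedContinuousFunction.coe_add, Pi.add_apply]
    rw [hF p (fun h => hp (Finset.mem_union_left _ h)),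
      hG p (fun h => hp (Finset.mem_union_right _ h)), add_zero]
  zero_mem' := ⟨∅, fun p _ => rfl⟩
  smul_mem' := by
    rintro c a ⟨F, hF⟩
    refine ⟨F, fun p hp => ?_⟩
    simp [hF p hp]

/-- The closure of the finitely supported sequences: a Banach space of strongly almost
null sequences. -/
def Vsub : Submodule ℂ (BoundedContinuousFunction (ℕ × ℕ) ℂ) := fsSub.topologicalClosure

instance : CompleteSpace Vsub :=
  (Submodule.isClosed_topologicalClosure fsSub).completeSpace_coe

lemma V_sac (x : Vsub) :
    StronglyAlmostConvTo (((x : BoundedContinuousFunction (ℕ × ℕ) ℂ)) : ℕ × ℕ → ℂ) 0 := by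
  apply sac_of_approx
  intro ε hε
  have hx : (x : BoundedContinuousFunction (ℕ × ℕ) ℂ) ∈ closure (fsSub :
      Set (BoundedContinuousFunction (ℕ × ℕ) ℂ)) := by
    have h2 := x.2
    rwa [← Submodule.topologicalClosure_coe]
  rw [Metric.mem_closure_iff] at hx
  obtain ⟨w, hwm, hwd⟩ := hx ε hε
  obtain ⟨F, hF⟩ := hwm
  refine ⟨⇑w, F, hF, fun p => ?_⟩
  have h3 := BoundedContinuousFunction.dist_coe_le_dist
    (f := (x : BoundedContinuousFunction (ℕ × ℕ) ℂ)) (g := w) p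
  rw [Complex.dist_eq] at h3
  exact h3.trans hwd.le

end Stmt16Aux
/-- `A ∈ ([C_f] : M_u)` iff each row of `A` lies in the `β(bp)`-dual of
`[C_f]` and `sup_{m,n} Σ_{k,l} |a_{mnkl}| < ∞`. -/
theorem stmt16 (A : ℕ × ℕ → ℕ × ℕ → ℂ) :
    -- A ∈ ([C_f] : M_u)
    (∀ x : ℕ × ℕ → ℂ, (∃ L, StronglyAlmostConvTo x L) →
      ∃ y : ℕ × ℕ → ℂ,
        (∀ m n : ℕ, BPConvTo (PartialSums (fun p : ℕ × ℕ => A (m, n) p * x p)) (y (m, n))) ∧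
        Bdd2 y) ↔
    -- (1) rows in the β(bp)-dual of [C_f]
    ((∀ m n : ℕ, ∀ x : ℕ × ℕ → ℂ, (∃ L, StronglyAlmostConvTo x L) →
        BPSeriesConv (fun p : ℕ × ℕ => A (m, n) p * x p)) ∧
    -- (2) sup_{m,n} Σ_{k,l} |a_{mnkl}| < ∞
    (∃ M : ℝ, ∀ m n : ℕ, ∀ F : Finset (ℕ × ℕ),
        ∑ kl ∈ F, ‖A (m, n) kl‖ ≤ M)) := by
  classical
  constructor
  · -- forward direction
    intro hA
    constructor
    · intro m n x hx
      obtain ⟨y, hy, -⟩ := hA x hx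
      exact ⟨y (m, n), hy m n⟩
    · -- uniform boundedness
      have hxV : ∀ x : Vsub, ∃ L, StronglyAlmostConvTo
          (((x : BoundedContinuousFunction (ℕ × ℕ) ℂ)) : ℕ × ℕ → ℂ) L :=
        fun x => ⟨0, V_sac x⟩
      choose yfun hy1 hy2 using fun x : Vsub => hA _ (hxV x)
      -- partial-sum continuous linear functionals
      have hgex : ∀ m n N : ℕ, ∃ g : Vsub →L[ℂ] ℂ, ∀ x : Vsub,
          g x = PartialSums (fun p : ℕ × ℕ =>
            A (m, n) p * (x : BoundedContinuousFunction (ℕ × ℕ) ℂ) p) (N, N) := by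
        intro m n N
        refine ⟨((∑ k ∈ Finset.range (N + 1), ∑ l ∈ Finset.range (N + 1),
          A (m, n) (k, l) • BoundedContinuousFunction.evalCLM (𝕜 := ℂ)
            ((k, l) : ℕ × ℕ))).comp Vsub.subtypeL, fun x => ?_⟩
        simp [PartialSums, ContinuousLinearMap.sum_apply, smul_eq_mul]
      choose g hg using hgex
      -- the limit functionals
      have hFex : ∀ m n : ℕ, ∃ f : Vsub →L[ℂ] ℂ, ∀ x : Vsub, f x = yfun x (m, n) := by
        intro m n
        have ht : Tendsto (fun (N : ℕ) (x : Vsub) => g m n N x) atTop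
            (nhds fun x : Vsub => yfun x (m, n)) := by
          rw [tendsto_pi_nhds]
          intro x
          have h2 := pdiag (hy1 x m n).2
          simpa only [hg] using h2
        exact ⟨continuousLinearMapOfTendsto (g m n) ht, fun x => rfl⟩
      choose Ff hFf using hFex
      have hptw : ∀ x : Vsub, ∃ C, ∀ p : ℕ × ℕ, ‖Ff p.1 p.2 x‖ ≤ C := by
        intro x
        obtain ⟨Mx, hMx⟩ := hy2 x
        refine ⟨Mx, fun p => ?_⟩
        rw [hFf]
        exact hMx p.1 p.2
      obtain ⟨C, hC⟩ := banach_steinhaus (g := fun p : ℕ × ℕ => Ff p.1 p.2) hptw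
      refine ⟨C, fun m n F => ?_⟩
      -- the sign sequence
      set a : ℕ × ℕ → ℂ := A (m, n) with ha
      set sg : ℕ × ℕ → ℂ := fun p => if p ∈ F then
        (if a p = 0 then 0 else (starRingEnd ℂ) (a p) / (‖a p‖ : ℂ)) else 0
        with hsgdef
      have hsgb : ∀ p : ℕ × ℕ, ‖sg p‖ ≤ 1 := by
        intro p
        rw [hsgdef]
        dsimp only
        split_ifs with h1 h2
        · simp
        · have hne : ‖a p‖ ≠ 0 := norm_ne_zero_iff.mpr h2
          rw [norm_div, Complex.norm_conj,
            Complex.norm_real, norm_norm, div_self hne]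
        · simp
      set xF : BoundedContinuousFunction (ℕ × ℕ) ℂ :=
        BoundedContinuousFunction.ofNormedAddCommGroup sg continuous_of_discreteTopology 1 hsgb
        with hxFdef
      have hxFapp : ∀ p, xF p = sg p := fun p => rfl
      have hxFmem : xF ∈ Vsub := Submodule.le_topologicalClosure fsSub
        ⟨F, fun p hp => by rw [hxFapp, hsgdef]; simp [hp]⟩
      set xV : Vsub := ⟨xF, hxFmem⟩ with hxVdef
      have hmul : ∀ p : ℕ × ℕ, a p * xF p =
          if p ∈ F then ((‖a p‖ : ℝ) : ℂ) else 0 := by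
        intro p
        rw [hxFapp, hsgdef]
        dsimp only
        split_ifs with h1 h2
        · simp [h2]
        · have habs : ((‖a p‖ : ℝ) : ℂ) ≠ 0 :=
            Complex.ofReal_ne_zero.mpr (norm_ne_zero_iff.mpr h2)
          rw [← mul_div_assoc, div_eq_iff habs, Complex.mul_conj, Complex.normSq_eq_norm_sq]
          push_cast
          ring
        · simp
      set v : ℝ := ∑ p ∈ F, ‖a p‖ with hv
      have hv0 : 0 ≤ v := Finset.sum_nonneg fun _ _ => norm_nonneg _
      set Nmax : ℕ := F.sup fun p => max p.1 p.2 with hNmax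
      have hps : ∀ N, Nmax ≤ N →
          PartialSums (fun p : ℕ × ℕ => a p * xF p) (N, N) = (v : ℂ) := by
        intro N hN
        have hsub : F ⊆ (Finset.range (N + 1)) ×ˢ (Finset.range (N + 1)) := by
          intro p hp
          have h3 : max p.1 p.2 ≤ Nmax := hNmax ▸ Finset.le_sup (f := fun p : ℕ × ℕ => max p.1 p.2) hp
          simp only [Finset.mem_product, Finset.mem_range]
          omega
        rw [show PartialSums (fun p : ℕ × ℕ => a p * xF p) (N, N) =
            ∑ p ∈ (Finset.range (N + 1)) ×ˢ (Finset.range (N + 1)), a p * xF p from by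
          rw [PartialSums, Finset.sum_product]]
        rw [Finset.sum_congr rfl fun p _ => hmul p, Finset.sum_ite_mem,
          Finset.inter_eq_right.mpr hsub, hv, Complex.ofReal_sum]
      have hval : yfun xV (m, n) = (v : ℂ) :=
        pconv_eventually_const (hy1 xV m n).2 Nmax hps
      have habs2 : ‖yfun xV (m, n)‖ = v := by
        rw [hval, Complex.norm_of_nonneg hv0]
      have hxV1 : ‖xV‖ ≤ 1 := by
        have h6 : ‖xF‖ ≤ 1 := BoundedContinuousFunction.norm_ofNormedAddCommGroup_le
          continuous_of_discreteTopology zero_le_one hsgb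
        exact h6
      have hfin : v ≤ C := by
        have h5 : ‖Ff m n xV‖ ≤ C * 1 := by
          calc ‖Ff m n xV‖ ≤ ‖Ff m n‖ * ‖xV‖ := (Ff m n).le_opNorm xV
          _ ≤ C * 1 := mul_le_mul (hC (m, n)) hxV1 (norm_nonneg _)
              ((norm_nonneg _).trans (hC (m, n)))
        rw [hFf, habs2, mul_one] at h5
        exact h5
      calc ∑ kl ∈ F, ‖a kl‖ = v := hv.symm
        _ ≤ C := hfin
  · -- backward direction
    rintro ⟨h1, M, hM⟩ x hx
    obtain ⟨L, hL⟩ := hx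
    obtain ⟨C, hC0, hC⟩ := sac_bounded hL
    have hM0 : 0 ≤ M := le_trans (by simp) (hM 0 0 ∅)
    have hy : ∀ m n : ℕ, ∃ S, BPConvTo (PartialSums
        (fun p : ℕ × ℕ => A (m, n) p * x p)) S := fun m n => h1 m n x ⟨L, hL⟩
    choose y hyS using hy
    refine ⟨fun p => y p.1 p.2, fun m n => hyS m n, ?_⟩
    refine ⟨M * C, fun m n => ?_⟩
    have hbd : ∀ N : ℕ, ‖PartialSums
        (fun p : ℕ × ℕ => A (m, n) p * x p) (N, N)‖ ≤ M * C := by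
      intro N
      have h2 : PartialSums (fun p : ℕ × ℕ => A (m, n) p * x p) (N, N) =
          ∑ p ∈ (Finset.range (N + 1)) ×ˢ (Finset.range (N + 1)), A (m, n) p * x p := by
        rw [PartialSums, Finset.sum_product]
      rw [h2]
      calc ‖∑ p ∈ (Finset.range (N + 1)) ×ˢ (Finset.range (N + 1)),
          A (m, n) p * x p‖
          ≤ ∑ p ∈ (Finset.range (N + 1)) ×ˢ (Finset.range (N + 1)),
            ‖A (m, n) p * x p‖ := norm_sum_le _ _
        _ ≤ ∑ p ∈ (Finset.range (N + 1)) ×ˢ (Finset.range (N + 1)),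
            ‖A (m, n) p‖ * C := by
            refine Finset.sum_le_sum fun p _ => ?_
            rw [norm_mul]
            exact mul_le_mul_of_nonneg_left (hC p) (norm_nonneg _)
        _ = (∑ p ∈ (Finset.range (N + 1)) ×ˢ (Finset.range (N + 1)),
            ‖A (m, n) p‖) * C := by rw [Finset.sum_mul]
        _ ≤ M * C := mul_le_mul_of_nonneg_right (hM m n _) hC0
    have hdiag := (pdiag (hyS m n).2).norm
    have hle : ‖y m n‖ ≤ M * C := le_of_tendsto' hdiag fun N => by
      exact hbd N
    exact hle
end
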